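/- The number e is transcendental over ℚ. -/

import Mathlib

open Polynomial Nat Finset

lemma iter_deriv_eval (f : ℤ[X]) (r : ℤ) (j : ℕ) :
    (derivative^[j] f).eval r = j ! * (Polynomial.taylor r f).coeff j := by
  rw [taylor_coeff, ← factorial_smul_hasseDeriv]
  simp [smul_eval]

lemma taylor_factored (g : ℤ[X]) (r : ℤ) (q : ℕ) :
    Polynomial.taylor r ((X - C r) ^ q * g) = X ^ q * Polynomial.taylor r g := by
  have h1 : Polynomial.taylor r ((X - C r) ^ q * g)
      = taylorAlgHom r ((X - C r) ^ q) * taylorAlgHom r g := by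
    rw [← map_mul]; rfl
  rw [h1, map_pow]
  congr 1
  show (Polynomial.taylor r (X - C r)) ^ q = X ^ q
  rw [map_sub, taylor_X, taylor_C]
  ring

lemma taylor_coeff_zero_of_dvd (f g : ℤ[X]) (r : ℤ) (q j : ℕ) (hj : j < q)
    (h : f = (X - C r) ^ q * g) : (Polynomial.taylor r f).coeff j = 0 := by
  rw [h, taylor_factored, coeff_X_pow_mul']
  simp [Nat.not_le.2 hj]

lemma fact_dvd_sumderiv (f g : ℤ[X]) (r : ℤ) (p N : ℕ)
    (h : f = (X - C r) ^ p * g) :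
    (p ! : ℤ) ∣ ∑ j ∈ range N, (derivative^[j] f).eval r := by
  refine Finset.dvd_sum fun j _ => ?_
  rcases lt_or_ge j p with hj | hj
  · simp [iter_deriv_eval, taylor_coeff_zero_of_dvd f g r p j hj h]
  · rw [iter_deriv_eval]
    exact Dvd.dvd.mul_right (Int.natCast_dvd_natCast.2 (factorial_dvd_factorial hj)) _

lemma sumderiv_at_zero (f g : ℤ[X]) (p N : ℕ) (hp : 1 ≤ p) (hN : p ≤ N)
    (h : f = X ^ (p - 1) * g) :
    ∃ k : ℤ, ∑ j ∈ range N, (derivative^[j] f).eval 0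
      = (p - 1)! * (g.eval 0 + p * k) := by
  have hXC : f = (X - C (0:ℤ)) ^ (p-1) * g := by simpa using h
  have hsplit : ∑ j ∈ range N, (derivative^[j] f).eval 0
      = (∑ j ∈ range p, (derivative^[j] f).eval 0)
        + ∑ j ∈ Finset.Ico p N, (derivative^[j] f).eval 0 := by
    simp only [range_eq_Ico]
    exact (Finset.sum_Ico_consecutive _ (Nat.zero_le p) hN).symm
  have hhead : ∑ j ∈ range p, (derivative^[j] f).eval 0 = ((p-1)! : ℤ) * g.eval 0 := by
    have hp' : p = (p - 1) + 1 := (Nat.succ_pred_eq_of_pos hp).symm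
    rw [hp', Finset.sum_range_succ]
    have h0 : ∑ j ∈ range (p-1), (derivative^[j] f).eval 0 = 0 := by
      refine Finset.sum_eq_zero fun j hj => ?_
      rw [iter_deriv_eval, taylor_coeff_zero_of_dvd f g 0 (p-1) j (mem_range.1 hj) hXC,
        mul_zero]
    rw [h0, zero_add, iter_deriv_eval]
    congr 1
    rw [taylor_zero]
    have := coeff_X_pow_mul g (p-1) 0
    rw [zero_add] at this
    rw [h, this, Polynomial.coeff_zero_eq_eval_zero]
  have htail : (((p)!:ℤ)) ∣ ∑ j ∈ Finset.Ico p N, (derivative^[j] f).eval 0 := by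
    refine Finset.dvd_sum fun j hj => ?_
    rw [iter_deriv_eval]
    exact Dvd.dvd.mul_right
      (Int.natCast_dvd_natCast.2 (factorial_dvd_factorial (Finset.mem_Ico.1 hj).1)) _
  obtain ⟨t, ht⟩ := htail
  refine ⟨t, ?_⟩
  have hfact : ((p)! : ℤ) = p * (p-1)! := by
    exact_mod_cast (Nat.mul_factorial_pred (by omega : p ≠ 0)).symm
  rw [hsplit, hhead, ht, hfact]
  ring

lemma deriv_sum_shift (P : ℝ[X]) (N : ℕ) (hN : P.natDegree < N) :
    derivative (∑ j ∈ range N, derivative^[j] P)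
      = (∑ j ∈ range N, derivative^[j] P) - P := by
  rw [map_sum]
  have h1 : ∑ j ∈ range N, derivative (derivative^[j] P)
      = ∑ j ∈ range N, derivative^[j+1] P := by
    refine Finset.sum_congr rfl fun j _ => ?_
    rw [Function.iterate_succ_apply']
  rw [h1]
  have h2 : ∑ j ∈ range N, derivative^[j+1] P
      = (∑ j ∈ range (N+1), derivative^[j] P) - P := by
    rw [Finset.sum_range_succ' (fun j => derivative^[j] P) N]
    simp
  rw [h2, Finset.sum_range_succ, Polynomial.iterate_derivative_eq_zero hN, add_zero]

lemma key_estimate (P : ℝ[X]) (N : ℕ) (hN : P.natDegree < N) (t : ℝ) (ht : 0 ≤ t)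
    (B : ℝ) (hB : ∀ x ∈ Set.Icc (0:ℝ) t, |P.eval x| ≤ B) :
    |Real.exp t * (∑ j ∈ range N, derivative^[j] P).eval 0
      - (∑ j ∈ range N, derivative^[j] P).eval t| ≤ t * Real.exp t * B := by
  set F := ∑ j ∈ range N, derivative^[j] P with hF
  set g : ℝ → ℝ := fun x => Real.exp (-x) * F.eval x with hg
  have hderiv : ∀ x : ℝ, HasDerivAt g (-(Real.exp (-x) * P.eval x)) x := by
    intro x
    have h1 : HasDerivAt (fun x : ℝ => Real.exp (-x)) (-Real.exp (-x)) x := by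
      simpa using (hasDerivAt_neg x).exp
    have h2 : HasDerivAt (fun x : ℝ => F.eval x) (F.derivative.eval x) x :=
      Polynomial.hasDerivAt F x
    have : HasDerivAt (fun y : ℝ => Real.exp (-y) * F.eval y)
        (-Real.exp (-x) * F.eval x + Real.exp (-x) * F.derivative.eval x) x := h1.mul h2
    convert this using 1
    rw [hF, deriv_sum_shift P N hN]
    simp only [eval_sub]
    ring
  have hB0 : 0 ≤ B := le_trans (abs_nonneg _) (hB 0 (Set.mem_Icc.2 ⟨le_refl _, ht⟩))
  have hbound : |g t - g 0| ≤ B * |t - 0| := by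
    refine (convex_Icc (0:ℝ) t).norm_image_sub_le_of_norm_hasDerivWithin_le
      (fun x hx => (hderiv x).hasDerivWithinAt) (fun x hx => ?_)
      (Set.mem_Icc.2 ⟨le_refl _, ht⟩) (Set.mem_Icc.2 ⟨ht, le_refl _⟩)
    rw [Real.norm_eq_abs, abs_neg, abs_mul, Real.abs_exp]
    calc Real.exp (-x) * |P.eval x| ≤ 1 * B := by
          refine mul_le_mul ?_ (hB x hx) (abs_nonneg _) zero_le_one
          rw [Real.exp_le_one_iff]
          simpa using hx.1
      _ = B := one_mul B
  have hexp : Real.exp t * (g 0 - g t) = Real.exp t * F.eval 0 - F.eval t := by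
    simp only [hg]
    rw [neg_zero, Real.exp_zero, Real.exp_neg]
    field_simp
  calc |Real.exp t * F.eval 0 - F.eval t| = Real.exp t * |g t - g 0| := by
        rw [← hexp, abs_mul, Real.abs_exp, abs_sub_comm]
    _ ≤ Real.exp t * (B * |t - 0|) := by
        exact mul_le_mul_of_nonneg_left hbound (Real.exp_pos t).le
    _ = t * Real.exp t * B := by
        rw [sub_zero, abs_of_nonneg ht]; ring

lemma hermite_step (n : ℕ) (hn : 1 ≤ n) (a : ℕ → ℤ) (p : ℕ) (hp : p.Prime) (hpn : n < p)
    (hpa : (a 0).natAbs < p) (ha0 : a 0 ≠ 0)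
    (hsum : ∑ i ∈ range (n+1), (a i : ℝ) * Real.exp 1 ^ i = 0) :
    ((p-1)! : ℝ) ≤ (∑ i ∈ range (n+1), |(a i : ℝ)|) * (n * Real.exp n)
      * ((n:ℝ)^(n+1))^p := by
  set g : ℤ[X] := ∏ k ∈ Icc 1 n, (X - C (k:ℤ)) ^ p with hg
  set fp : ℤ[X] := X ^ (p-1) * g with hfp
  set N := (n+1)*p with hN
  have hp1 : 1 ≤ p := hp.one_lt.le
  have hpN : p ≤ N := Nat.le_mul_of_pos_left p (by omega)
  -- monicity and degree
  have hgmonic : g.Monic := monic_prod_of_monic _ _ fun k _ => (monic_X_sub_C _).pow p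
  have hfpmonic : fp.Monic := (monic_X_pow _).mul hgmonic
  have hdeg : fp.natDegree < N := by
    have h1 : fp.natDegree = (p-1) + g.natDegree :=
      by rw [hfp, (monic_X_pow _).natDegree_mul hgmonic, natDegree_X_pow]
    have h2 : g.natDegree = n * p := by
      rw [hg, natDegree_prod _ _ fun k _ => pow_ne_zero _ (X_sub_C_ne_zero _)]
      rw [Finset.sum_congr rfl fun k _ => by
        rw [natDegree_pow, natDegree_X_sub_C, mul_one]]
      simp [Nat.card_Icc]
    rw [h1, h2, hN]
    have hx : (n+1)*p = n*p + p := by ring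
    omega
  ------------------------------------------------------------------
  -- ARITHMETIC PART
  ------------------------------------------------------------------
  set Jint : ℤ := ∑ i ∈ range (n+1), a i * ∑ j ∈ range N,
      (derivative^[j] fp).eval (i:ℤ) with hJint
  obtain ⟨k0, hk0⟩ := sumderiv_at_zero fp g p N hp1 hpN rfl
  have hdvd : ∀ i < n, (p ! : ℤ) ∣ ∑ j ∈ range N,
      (derivative^[j] fp).eval ((i:ℤ)+1) := by
    intro i hi
    have hmem : (i+1) ∈ Icc 1 n := by simp; omega
    have hfac : fp = (X - C ((i:ℤ)+1)) ^ p *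
        (X ^ (p-1) * ∏ k ∈ (Icc 1 n).erase (i+1), (X - C (k:ℤ)) ^ p) := by
      rw [hfp, hg, ← Finset.mul_prod_erase _ _ hmem]
      push_cast
      ring
    exact fact_dvd_sumderiv _ _ _ p _ hfac
  have hsplit : Jint
      = a 0 * ∑ j ∈ range N, (derivative^[j] fp).eval 0
        + ∑ i ∈ range n, a (i+1) * ∑ j ∈ range N,
            (derivative^[j] fp).eval ((i:ℤ)+1) := by
    rw [hJint, Finset.sum_range_succ' (fun i => a i * ∑ j ∈ range N,
      (derivative^[j] fp).eval (i:ℤ)) n]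
    push_cast
    ring
  obtain ⟨t, ht⟩ : (p ! : ℤ) ∣ ∑ i ∈ range n, a (i+1) * ∑ j ∈ range N,
      (derivative^[j] fp).eval ((i:ℤ)+1) :=
    Finset.dvd_sum fun i hi => (hdvd i (mem_range.1 hi)).mul_left _
  have hfact : ((p)! : ℤ) = p * (p-1)! := by
    exact_mod_cast (Nat.mul_factorial_pred (by omega : p ≠ 0)).symm
  set M : ℤ := a 0 * g.eval 0 + p * (a 0 * k0 + t) with hM
  have hJM : Jint = (p-1)! * M := by
    rw [hsplit, hk0, ht, hfact, hM]
    ring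
  have hMne : M ≠ 0 := by
    intro hM0
    have hpdvd : (p : ℤ) ∣ a 0 * g.eval 0 := ⟨-(a 0 * k0 + t), by rw [hM] at hM0; linarith⟩
    have hpp : Prime (p : ℤ) := Nat.prime_iff_prime_int.1 hp
    rcases hpp.dvd_mul.1 hpdvd with h | h
    · have := Int.le_of_dvd (abs_pos.2 ha0) ((dvd_abs _ _).2 h)
      rw [Int.abs_eq_natAbs] at this
      exact_mod_cast absurd (by exact_mod_cast this) (by omega)
    · have hge : g.eval 0 = ∏ k ∈ Icc 1 n, (-(k:ℤ)) ^ p := by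
        rw [hg, eval_prod]
        exact Finset.prod_congr rfl fun k _ => by simp
      rw [hge] at h
      obtain ⟨k, hk, hpk⟩ := hpp.exists_mem_finset_dvd h
      have : (p:ℤ) ∣ (k:ℤ) := (Int.dvd_neg.1 (hpp.dvd_of_dvd_pow hpk))
      have hk' := Finset.mem_Icc.1 hk
      have := Int.le_of_dvd (by exact_mod_cast Nat.lt_of_lt_of_le Nat.zero_lt_one hk'.1) this
      have : p ≤ k := by exact_mod_cast this
      omega
  have hlow : ((p-1)! : ℤ) ≤ |Jint| := by
    rw [hJM, abs_mul]
    have h1 : (1:ℤ) ≤ |M| := Int.one_le_abs (by omega)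
    have h2 : |((p-1)! : ℤ)| = ((p-1)! : ℤ) := abs_of_nonneg (by positivity)
    nlinarith [abs_nonneg M, Int.natCast_pos.2 (Nat.factorial_pos (p-1))]
  ------------------------------------------------------------------
  -- ANALYTIC PART
  ------------------------------------------------------------------
  set fpR : ℝ[X] := fp.map (Int.castRingHom ℝ) with hfpR
  set FR : ℝ[X] := ∑ j ∈ range N, derivative^[j] fpR with hFR
  have hdegR : fpR.natDegree < N := by
    rw [hfpR, hfpmonic.natDegree_map]; exact hdeg
  have hcast0 : ∀ (h : ℤ[X]) (i : ℕ), (Int.cast (h.eval (i:ℤ)) : ℝ)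
      = (h.map (Int.castRingHom ℝ)).eval (i:ℝ) := by
    intro h i
    have := Polynomial.eval_intCast_map (Int.castRingHom ℝ) h (i:ℤ)
    simp only [eq_intCast, Int.cast_natCast] at this
    exact this.symm
  have hcast : ∀ i : ℕ, (Int.cast (∑ j ∈ range N, (derivative^[j] fp).eval (i:ℤ)) : ℝ)
      = FR.eval (i:ℝ) := by
    intro i
    rw [hFR, eval_finset_sum, Int.cast_sum]
    exact Finset.sum_congr rfl fun j _ => by
      rw [hcast0, hfpR, Polynomial.iterate_derivative_map]
  -- bound on |fpR| over [0, n]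
  set B : ℝ := ((n:ℝ)^(n+1))^p with hB
  have hBnn : 0 ≤ B := by positivity
  have hn1R : (1:ℝ) ≤ (n:ℝ) := by exact_mod_cast hn
  have hfpRbound : ∀ x ∈ Set.Icc (0:ℝ) (n:ℝ), |fpR.eval x| ≤ B := by
    intro x hx
    obtain ⟨hx0, hxn⟩ := hx
    have hfpReval : fpR.eval x = x^(p-1) * ∏ k ∈ Icc 1 n, (x - (k:ℝ))^p := by
      rw [hfpR, hfp, hg]
      simp only [Polynomial.map_mul, Polynomial.map_pow, Polynomial.map_prod,
        Polynomial.map_sub, map_X, map_C, eval_mul, eval_pow, eval_X, eval_prod,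
        eval_sub, eval_C]
      norm_num
    rw [hfpReval, abs_mul, abs_pow, Finset.abs_prod]
    simp only [abs_pow]
    have hxabs : |x| ≤ (n:ℝ) := abs_le.2 ⟨by linarith, hxn⟩
    have hfac : ∀ k ∈ Icc 1 n, |x - (k:ℝ)|^p ≤ (n:ℝ)^p := by
      intro k hk
      have hk' := Finset.mem_Icc.1 hk
      have h1 : (1:ℝ) ≤ (k:ℝ) := by exact_mod_cast hk'.1
      have h2 : (k:ℝ) ≤ (n:ℝ) := by exact_mod_cast hk'.2
      exact pow_le_pow_left₀ (abs_nonneg _) (abs_le.2 ⟨by linarith, by linarith⟩) p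
    calc |x|^(p-1) * ∏ k ∈ Icc 1 n, |x - (k:ℝ)|^p
        ≤ (n:ℝ)^(p-1) * ∏ k ∈ Icc 1 n, (n:ℝ)^p := by
          refine mul_le_mul (pow_le_pow_left₀ (abs_nonneg _) hxabs _)
            (Finset.prod_le_prod (fun k _ => by positivity) hfac)
            (Finset.prod_nonneg fun k _ => by positivity) (by positivity)
      _ = (n:ℝ)^(p-1) * (n:ℝ)^(n*p) := by
          rw [Finset.prod_const, Nat.card_Icc, Nat.add_sub_cancel, ← pow_mul, Nat.mul_comm]
      _ ≤ (n:ℝ)^p * (n:ℝ)^(n*p) := by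
          have := pow_le_pow_right₀ hn1R (Nat.sub_le p 1)
          nlinarith [pow_nonneg (le_trans zero_le_one hn1R) (n*p)]
      _ = B := by rw [hB, ← pow_add, ← pow_mul]; ring_nf
  -- per-i key estimate
  have hesti : ∀ i ∈ range (n+1),
      |Real.exp i * FR.eval 0 - Polynomial.eval (i:ℝ) FR| ≤ (n:ℝ) * Real.exp n * B := by
    intro i hi
    have hin : i ≤ n := by have := mem_range.1 hi; omega
    have hinR : (i:ℝ) ≤ (n:ℝ) := by exact_mod_cast hin
    have h := key_estimate fpR N hdegR (i:ℝ) (by positivity) B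
      (fun x hx => hfpRbound x ⟨hx.1, le_trans hx.2 hinR⟩)
    rw [← hFR] at h
    refine le_trans h ?_
    have hexp : Real.exp i ≤ Real.exp n := Real.exp_le_exp.2 hinR
    gcongr
  -- expressing Jint in real terms
  have hexp1 : ∀ i : ℕ, Real.exp 1 ^ i = Real.exp i := by
    intro i
    rw [← Real.exp_nat_mul, mul_one]
  have hJreal : (Jint : ℝ) = ∑ i ∈ range (n+1),
      (a i : ℝ) * (Polynomial.eval (i:ℝ) FR - Real.exp i * FR.eval 0) := by
    have hz : ∑ i ∈ range (n+1), (a i : ℝ) * (Real.exp i * FR.eval 0) = 0 := by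
      have : ∑ i ∈ range (n+1), (a i : ℝ) * (Real.exp i * FR.eval 0)
          = (∑ i ∈ range (n+1), (a i : ℝ) * Real.exp 1 ^ i) * FR.eval 0 := by
        rw [Finset.sum_mul]
        exact Finset.sum_congr rfl fun i _ => by rw [hexp1]; ring
      rw [this, hsum, zero_mul]
    have : (Jint : ℝ) = ∑ i ∈ range (n+1), (a i : ℝ) * Polynomial.eval (i:ℝ) FR := by
      rw [hJint]
      push_cast
      exact Finset.sum_congr rfl fun i _ => by rw [← hcast i]; push_cast; ring
    calc (Jint : ℝ) = ∑ i ∈ range (n+1), (a i : ℝ) * Polynomial.eval (i:ℝ) FR := this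
      _ = (∑ i ∈ range (n+1), (a i : ℝ) * Polynomial.eval (i:ℝ) FR)
          - ∑ i ∈ range (n+1), (a i : ℝ) * (Real.exp i * FR.eval 0) := by
            rw [hz, sub_zero]
      _ = ∑ i ∈ range (n+1),
            (a i : ℝ) * (Polynomial.eval (i:ℝ) FR - Real.exp i * FR.eval 0) := by
            rw [← Finset.sum_sub_distrib]
            exact Finset.sum_congr rfl fun i _ => by ring
  -- final chain
  have hup : |(Jint : ℝ)| ≤ (∑ i ∈ range (n+1), |(a i : ℝ)|)
      * ((n:ℝ) * Real.exp n * B) := by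
    rw [hJreal]
    refine le_trans (Finset.abs_sum_le_sum_abs _ _) ?_
    rw [Finset.sum_mul]
    refine Finset.sum_le_sum fun i hi => ?_
    rw [abs_mul]
    refine mul_le_mul_of_nonneg_left ?_ (abs_nonneg _)
    rw [abs_sub_comm]
    exact hesti i hi
  have hlowR : ((p-1)! : ℝ) ≤ |(Jint : ℝ)| := by
    have := hlow
    rw [← Int.cast_abs]
    exact_mod_cast this
  calc ((p-1)! : ℝ) ≤ |(Jint : ℝ)| := hlowR
    _ ≤ (∑ i ∈ range (n+1), |(a i : ℝ)|) * ((n:ℝ) * Real.exp n * B) := hup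
    _ = (∑ i ∈ range (n+1), |(a i : ℝ)|) * ((n:ℝ) * Real.exp n) * B := by ring

/-- The number `e` is transcendental over `ℚ`. -/
theorem e_transcendental : Transcendental ℚ (Real.exp 1) := by
  intro h
  -- extract an integer polynomial with nonzero constant term
  have hZ : IsAlgebraic ℤ (Real.exp 1) := (IsFractionRing.isAlgebraic_iff ℤ ℚ ℝ).2 h
  obtain ⟨g, hg0, hge⟩ := hZ
  obtain ⟨q, hfac, hndvd⟩ := g.exists_eq_pow_rootMultiplicity_mul_and_not_dvd hg0 0
  rw [C_0, sub_zero] at hfac hndvd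
  have hq0 : q.coeff 0 ≠ 0 := fun hc => hndvd (X_dvd_iff.2 hc)
  have hqe : Polynomial.aeval (Real.exp 1) q = 0 := by
    rw [hfac, map_mul, map_pow, aeval_X] at hge
    exact (mul_eq_zero.1 hge).resolve_left (pow_ne_zero _ (Real.exp_pos 1).ne')
  set n := q.natDegree with hn
  set a : ℕ → ℤ := fun i => q.coeff i with ha
  have hn1 : 1 ≤ n := by
    by_contra hc
    push_neg at hc
    interval_cases hq : n
    · have : q = C (q.coeff 0) := Polynomial.eq_C_of_natDegree_eq_zero hq
      rw [this, aeval_C] at hqe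
      rw [algebraMap_int_eq, eq_intCast, Int.cast_eq_zero] at hqe
      exact hq0 hqe
  have hsum : ∑ i ∈ range (n+1), (a i : ℝ) * Real.exp 1 ^ i = 0 := by
    rw [Polynomial.aeval_eq_sum_range] at hqe
    simpa [zsmul_eq_mul] using hqe
  -- constants
  set CC : ℝ := (∑ i ∈ range (n+1), |(a i : ℝ)|) * (n * Real.exp n) with hCC
  set c : ℝ := (n:ℝ)^(n+1) with hc
  have hc1 : (1:ℝ) ≤ c := one_le_pow₀ (by exact_mod_cast hn1)
  have hCCnn : 0 ≤ CC := by
    rw [hCC]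
    have : (0:ℝ) ≤ ∑ i ∈ range (n+1), |(a i : ℝ)| :=
      Finset.sum_nonneg fun i _ => abs_nonneg _
    positivity
  set D : ℝ := CC * c + 1 with hD
  have hDpos : 0 < D := by positivity
  -- choose K from the factorial growth
  have htend : Filter.Tendsto (fun k : ℕ => c ^ k / (k)!) Filter.atTop (nhds 0) :=
    FloorSemiring.tendsto_pow_div_factorial_atTop c
  have hev : ∀ᶠ k in Filter.atTop, c ^ k / (k)! < 1 / D :=
    htend.eventually_lt_const (by positivity)
  obtain ⟨K, hK⟩ := Filter.eventually_atTop.1 hev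
  -- choose the prime
  obtain ⟨p, hpge, hp⟩ := Nat.exists_infinite_primes
    (max (max (n+1) ((a 0).natAbs + 1)) (K+1))
  have hpn : n < p := by
    have h1 : n+1 ≤ p := le_trans (le_trans (le_max_left _ _) (le_max_left _ _)) hpge
    omega
  have hpa : (a 0).natAbs < p := by
    have h1 : (a 0).natAbs+1 ≤ p := le_trans (le_trans (le_max_right _ _) (le_max_left _ _)) hpge
    omega
  have hKp : K ≤ p - 1 := by
    have h1 : K+1 ≤ p := le_trans (le_max_right _ _) hpge
    omega
  have hmain := hermite_step n hn1 a p hp hpn hpa hq0 hsum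
  rw [← hCC, ← hc] at hmain
  have hfa : (0:ℝ) < ((p-1)! : ℝ) := by exact_mod_cast Nat.factorial_pos (p-1)
  have h2 := hK (p-1) hKp
  rw [div_lt_div_iff₀ hfa hDpos] at h2
  have hcp : c ^ p = c * c ^ (p-1) := by
    have hp' : p = (p-1)+1 := (Nat.succ_pred_eq_of_pos hp.pos).symm
    rw [hp']
    simp only [Nat.add_sub_cancel]
    rw [pow_succ]
    ring
  have hlt : CC * c ^ p < ((p-1)! : ℝ) := by
    calc CC * c ^ p = (CC * c) * c^(p-1) := by rw [hcp]; ring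
      _ ≤ D * c^(p-1) := by
          nlinarith [pow_nonneg (le_trans zero_le_one hc1) (p-1)]
      _ < ((p-1)! : ℝ) := by nlinarith
  exact absurd (lt_of_le_of_lt hmain hlt) (lt_irrefl _)
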